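/- arXiv:1902.00718 — 2 statements merged into one kernel-verified Lean document; each statement's English description precedes it below -/
import Mathlib

section
/- Let χ be an odd primitive Dirichlet character of conductor f (so χ(-1) = -1). Then Σ_{k=1}^{f} χ̄(k)·Log(1 + ζ_f^{-k}) = -(2πi/f)·Σ_{1 ≤ k < f/2} χ̄(k)·k, where Log denotes the principal branch of the complex logarithm. -/
open Complex

lemma log_one_add_exp_mul_I (t : ℝ) (h1 : -Real.pi < t) (h2 : t < Real.pi) :
    Complex.log (1 + Complex.exp ((t : ℂ) * I)) =
      (Real.log (2 * Real.cos (t / 2)) : ℂ) + ((t / 2 : ℝ) : ℂ) * I := by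
  have hpi := Real.pi_pos
  have hc : 0 < Real.cos (t / 2) :=
    Real.cos_pos_of_mem_Ioo ⟨by linarith, by linarith⟩
  have key : (1 : ℂ) + Complex.exp ((t:ℂ) * I) =
      Complex.exp ((Real.log (2 * Real.cos (t/2)) : ℂ) + ((t/2 : ℝ) : ℂ) * I) := by
    rw [Complex.exp_add, ← Complex.ofReal_exp, Real.exp_log (by positivity)]
    have e1 : (t : ℂ) * I = ((2 * (t/2) : ℝ) : ℂ) * I := by push_cast; ring
    rw [e1, Complex.exp_mul_I, Complex.exp_mul_I, ← Complex.ofReal_cos, ← Complex.ofReal_sin,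
        ← Complex.ofReal_cos, ← Complex.ofReal_sin, Real.sin_two_mul, Real.cos_two_mul]
    push_cast
    ring
  rw [key, Complex.log_exp] <;> simp <;> linarith

lemma log_diff (f k : ℕ) (hk : 1 ≤ k) (hkf : 2 * k < f) :
    Complex.log (1 + Complex.exp (2 * Real.pi * I / f) ^ (-(k : ℤ))) -
      Complex.log (1 + Complex.exp (2 * Real.pi * I / f) ^ (-((f - k : ℕ) : ℤ))) =
      -(2 * Real.pi * I / f) * k := by
  have hpi := Real.pi_pos
  have hf0 : 0 < f := by omega
  have hfR : (0:ℝ) < f := by exact_mod_cast hf0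
  have hfC : (f:ℂ) ≠ 0 := by exact_mod_cast hf0.ne'
  set t : ℝ := 2 * Real.pi * k / f with ht
  have hkR : (1:ℝ) ≤ k := by exact_mod_cast hk
  have ht0 : 0 < t := by rw [ht]; positivity
  have htpi : t < Real.pi := by
    rw [ht, div_lt_iff₀ hfR]
    have : (2 * k : ℝ) < f := by exact_mod_cast hkf
    nlinarith
  have e1 : Complex.exp (2 * Real.pi * I / f) ^ (-(k : ℤ)) =
      Complex.exp (((-t : ℝ) : ℂ) * I) := by
    rw [← Complex.exp_int_mul]
    congr 1
    rw [ht]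
    push_cast
    field_simp
  have e2 : Complex.exp (2 * Real.pi * I / f) ^ (-((f - k : ℕ) : ℤ)) =
      Complex.exp (((t : ℝ) : ℂ) * I) := by
    rw [← Complex.exp_int_mul]
    have hkle : k ≤ f := by omega
    have harg : ((-((f - k : ℕ) : ℤ) : ℤ) : ℂ) * (2 * Real.pi * I / f) =
        ((t : ℝ) : ℂ) * I + ((-1 : ℤ) : ℂ) * (2 * Real.pi * I) := by
      rw [ht]
      push_cast [hkle]
      field_simp
      ring
    rw [harg, Complex.exp_add, Complex.exp_int_mul_two_pi_mul_I, mul_one]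
  rw [e1, e2, log_one_add_exp_mul_I (-t) (by linarith) (by linarith),
      log_one_add_exp_mul_I t (by linarith) htpi,
      show -t/2 = -(t/2) by ring, Real.cos_neg]
  rw [ht]
  push_cast
  field_simp
  ring

lemma sum_pairing (f : ℕ) (hf : 3 ≤ f) (c L : ℕ → ℂ) (A : ℂ)
    (hcf : c f = 0) (hchalf : ∀ k, 2 * k = f → c k = 0)
    (hcneg : ∀ k, 1 ≤ k → k < f → c (f - k) = - c k)
    (hdiff : ∀ k, 1 ≤ k → 2 * k < f → L k - L (f - k) = A * k) :
    ∑ k ∈ Finset.Icc 1 f, c k * L k =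
      A * ∑ k ∈ (Finset.Ico 1 f).filter (fun k => 2 * k < f), c k * k := by
  have h1 : Finset.Icc 1 f = Finset.Ico 1 (f + 1) := by rw [Finset.Ico_add_one_right_eq_Icc]
  rw [h1, Finset.sum_Ico_succ_top (by omega), hcf, zero_mul, add_zero,
    ← Finset.sum_filter_add_sum_filter_not (Finset.Ico 1 f) (fun k => 2 * k < f)]
  have h2 : ∑ k ∈ (Finset.Ico 1 f).filter (fun k => ¬ 2 * k < f), c k * L k
      = ∑ k ∈ (Finset.Ico 1 f).filter (fun k => f < 2 * k), c k * L k := by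
    refine (Finset.sum_subset ?_ ?_).symm
    · intro x hx
      simp only [Finset.mem_filter, Finset.mem_Ico] at hx ⊢
      omega
    · intro x hx hnx
      simp only [Finset.mem_filter, Finset.mem_Ico] at hx hnx
      have hx2 : 2 * x = f := by omega
      rw [hchalf x hx2, zero_mul]
  have h3 : ∑ k ∈ (Finset.Ico 1 f).filter (fun k => f < 2 * k), c k * L k
      = ∑ k ∈ (Finset.Ico 1 f).filter (fun k => 2 * k < f), c (f - k) * L (f - k) := by
    refine Finset.sum_nbij' (i := fun k => f - k) (j := fun k => f - k) ?_ ?_ ?_ ?_ ?_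
    · intro a ha; simp only [Finset.mem_filter, Finset.mem_Ico] at ha ⊢; omega
    · intro a ha; simp only [Finset.mem_filter, Finset.mem_Ico] at ha ⊢; omega
    · intro a ha; simp only [Finset.mem_filter, Finset.mem_Ico] at ha
      show f - (f - a) = a; omega
    · intro a ha; simp only [Finset.mem_filter, Finset.mem_Ico] at ha
      show f - (f - a) = a; omega
    · intro a ha
      simp only [Finset.mem_filter, Finset.mem_Ico] at ha
      have : f - (f - a) = a := by omega
      rw [this]
  rw [h2, h3, ← Finset.sum_add_distrib, Finset.mul_sum]
  refine Finset.sum_congr rfl ?_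
  intro k hk
  simp only [Finset.mem_filter, Finset.mem_Ico] at hk
  rw [hcneg k hk.1.1 hk.1.2]
  have hd := hdiff k hk.1.1 hk.2
  calc c k * L k + (- c k) * L (f - k) = c k * (L k - L (f - k)) := by ring
    _ = c k * (A * k) := by rw [hd]
    _ = A * (c k * k) := by ring

/-- For an odd primitive Dirichlet character `χ` of conductor `f`,
`∑_{k=1}^{f} χ̄(k)·Log(1 + ζ_f^{-k}) = -(2πi/f)·∑_{1 ≤ k < f/2} χ̄(k)·k`. -/
theorem logSum_odd (f : ℕ) [NeZero f] (χ : DirichletCharacter ℂ f)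
    (hprim : χ.IsPrimitive) (hodd : χ (-1) = -1) :
    (∑ k ∈ Finset.Icc 1 f,
        (starRingEnd ℂ) (χ ((k : ℕ) : ZMod f)) *
          Complex.log (1 + Complex.exp (2 * Real.pi * I / f) ^ (-(k : ℤ)))) =
      -(2 * Real.pi * I / f) *
        ∑ k ∈ (Finset.Ico 1 f).filter (fun k => 2 * k < f),
          (starRingEnd ℂ) (χ ((k : ℕ) : ZMod f)) * (k : ℂ) := by
  have hf3 : 3 ≤ f := by
    rcases Nat.lt_or_ge f 3 with h | h
    · exfalso
      have hf0 := NeZero.ne f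
      have h2 : ((2 : ℕ) : ZMod f) = 0 :=
        (ZMod.natCast_eq_zero_iff 2 f).mpr
          (by rcases (show f = 1 ∨ f = 2 by omega) with rfl | rfl <;> norm_num)
      have hne : (-1 : ZMod f) = 1 := by
        push_cast at h2
        linear_combination -h2
      rw [hne, map_one] at hodd
      exact absurd hodd (by norm_num)
    · exact h
  haveI : Fact (1 < f) := ⟨by omega⟩
  refine sum_pairing f hf3 _ _ _ ?_ ?_ ?_ ?_
  · simp only [ZMod.natCast_self]
    rw [MulChar.map_nonunit χ (by simp [isUnit_zero_iff]), map_zero]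
  · intro k hk
    have hknu : ¬ IsUnit ((k : ℕ) : ZMod f) := by
      rw [ZMod.isUnit_iff_coprime]
      intro hco
      have hdvd : k ∣ f := ⟨2, by omega⟩
      have hg : Nat.gcd k f = 1 := hco
      have := Nat.gcd_eq_left hdvd
      omega
    rw [MulChar.map_nonunit χ hknu, map_zero]
  · intro k hk1 hkf
    have hkle : k ≤ f := le_of_lt hkf
    have hcast : ((f - k : ℕ) : ZMod f) = - (k : ZMod f) := by
      push_cast [hkle]
      simp
    rw [hcast, show -(k : ZMod f) = (-1) * k by ring, map_mul, hodd]
    simp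
  · intro k hk1 hk2
    exact log_diff f k hk1 hk2
end

section
/- Let s ≥ 2 and let χ be a primitive Dirichlet character of conductor 2^s. Then χ(1 + 2^{s-1}) = -1. -/
/-- For `s ≥ 2` and a primitive Dirichlet character `χ` of conductor `2^s`,
`χ(1 + 2^{s-1}) = -1`. -/
theorem primitive_char_val_one_add_half_conductor (s : ℕ) (hs : 2 ≤ s)
    (χ : DirichletCharacter ℂ (2 ^ s)) (hprim : χ.IsPrimitive) :
    χ ((1 + 2 ^ (s - 1) : ℕ) : ZMod (2 ^ s)) = -1 := by
  obtain ⟨t, rfl⟩ : ∃ t, s = t + 2 := ⟨s - 2, by omega⟩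
  haveI : NeZero (2 ^ (t + 2)) := ⟨by positivity⟩
  set x : ZMod (2 ^ (t + 2)) := ((1 + 2 ^ (t + 2 - 1) : ℕ) : ZMod (2 ^ (t + 2))) with hx
  have hx' : x = ((1 + 2 ^ (t + 1) : ℕ) : ZMod (2 ^ (t + 2))) := rfl
  -- x * x = 1
  have hxsq : x * x = 1 := by
    have hnat : ((1 + 2 ^ (t + 1)) * (1 + 2 ^ (t + 1)) : ℕ)
        = 1 + 2 ^ (t + 2) * (1 + 2 ^ t) := by ring
    have : (((1 + 2 ^ (t + 1)) * (1 + 2 ^ (t + 1)) : ℕ) : ZMod (2 ^ (t + 2))) = 1 := by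
      rw [hnat, Nat.cast_add, Nat.cast_mul, Nat.cast_one, ZMod.natCast_self, zero_mul,
        add_zero]
    rw [hx']
    push_cast at this ⊢
    linear_combination this
  have hchisq : χ x * χ x = 1 := by
    rw [← map_mul, hxsq, map_one]
  rcases mul_self_eq_one_iff.mp hchisq with h1 | h1
  · -- contradiction with primitivity
    exfalso
    have hdvd : 2 ^ (t + 1) ∣ 2 ^ (t + 2) := pow_dvd_pow 2 (by omega)
    have hft : χ.FactorsThrough (2 ^ (t + 1)) := by
      rw [DirichletCharacter.factorsThrough_iff_ker_unitsMap hdvd]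
      intro u hu
      have hu' : (ZMod.castHom hdvd (ZMod (2 ^ (t + 1)))) (u : ZMod (2 ^ (t + 2))) = 1 := by
        have := congrArg (Units.val) hu
        simpa [ZMod.unitsMap] using this
      have hval : (((u : ZMod (2 ^ (t + 2))).val : ℕ) : ZMod (2 ^ (t + 1))) = 1 := by
        rwa [ZMod.castHom_apply, ← ZMod.natCast_val] at hu'
      obtain ⟨k, hk⟩ := (ZMod.natCast_eq_iff _ _ _).mp hval
      have h1lt : 1 < 2 ^ (t + 1) := by
        calc 1 < 2 ^ 1 := by norm_num
          _ ≤ 2 ^ (t + 1) := Nat.pow_le_pow_right (by norm_num) (by omega)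
      have hone : ((1 : ZMod (2 ^ (t + 1)))).val = 1 := by
        rw [ZMod.val_one_eq_one_mod]; exact Nat.mod_eq_of_lt h1lt
      rw [hone] at hk
      have hlt : (u : ZMod (2 ^ (t + 2))).val < 2 ^ (t + 2) := ZMod.val_lt _
      have h2s : 2 ^ (t + 2) = 2 * 2 ^ (t + 1) := by ring
      have hcases : (u : ZMod (2 ^ (t + 2))).val = 1 ∨
          (u : ZMod (2 ^ (t + 2))).val = 1 + 2 ^ (t + 1) := by
        rcases Nat.lt_or_ge k 2 with hk2 | hk2
        · interval_cases k <;> omega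
        · exfalso
          have : 2 ^ (t + 1) * 2 ≤ 2 ^ (t + 1) * k := Nat.mul_le_mul_left _ hk2
          omega
      have hcoe : (u : ZMod (2 ^ (t + 2))) = 1 ∨ (u : ZMod (2 ^ (t + 2))) = x := by
        have hrec : (((u : ZMod (2 ^ (t + 2))).val : ℕ) : ZMod (2 ^ (t + 2)))
            = (u : ZMod (2 ^ (t + 2))) := ZMod.natCast_rightInverse _
        rcases hcases with h | h
        · left; rw [← hrec, h]; push_cast; rfl
        · right; rw [← hrec, h, hx']
      rw [MonoidHom.mem_ker]
      refine Units.ext ?_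
      rw [MulChar.coe_toUnitHom, Units.val_one]
      rcases hcoe with h | h <;> rw [h]
      · exact map_one χ
      · exact h1
    have hle : χ.conductor ≤ 2 ^ (t + 1) := Nat.sInf_le hft
    rw [hprim] at hle
    have : 2 ^ (t + 1) < 2 ^ (t + 2) := Nat.pow_lt_pow_right (by norm_num) (by omega)
    omega
  · exact h1
end
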